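/- The 3-dimensional hypercube graph Q₃ has proper orientation number exactly 2: it admits a proper orientation with maximum indegree 2, and admits no proper orientation with maximum indegree at most 1. -/
import Mathlib


/-- An orientation of a simple graph: a relation choosing exactly one
direction for each edge, and nothing else. -/
def IsOrientation {V : Type*} (G : SimpleGraph V) (o : V → V → Prop) : Prop :=
  (∀ u v, G.Adj u v ↔ (o u v ∨ o v u)) ∧ (∀ u v, o u v → ¬ o v u)

/-- Indegree of a vertex in an orientation. -/
noncomputable def inDeg {V : Type*} (o : V → V → Prop) (v : V) : ℕ :=
  {u | o u v}.ncard

/-- A proper orientation: adjacent vertices get distinct indegrees. -/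
def IsProper {V : Type*} (G : SimpleGraph V) (o : V → V → Prop) : Prop :=
  ∀ u v, G.Adj u v → inDeg o u ≠ inDeg o v

/-- The 3-dimensional hypercube graph: vertices are `Fin 3 → Bool`, adjacent
iff they differ in exactly one coordinate. -/
def cubeGraph : SimpleGraph (Fin 3 → Bool) :=
  SimpleGraph.fromRel (fun u v => {i | u i ≠ v i}.ncard = 1)

lemma ncard_eq_filter {α : Type*} [Fintype α] (p : α → Prop) [DecidablePred p] :
    {x | p x}.ncard = (Finset.univ.filter p).card := by
  rw [Set.ncard_eq_toFinset_card']
  simp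

/-- Our explicit orientation of the cube: edges in direction `0` go from odd
parity to even parity, other edges from even to odd. -/
def po (u v : Fin 3 → Bool) : Prop :=
  (Finset.univ.filter fun i => u i ≠ v i).card = 1 ∧
  ((u 0 != v 0) = (u 0 != (u 1 != u 2)))

instance (u v : Fin 3 → Bool) : Decidable (po u v) := by
  unfold po; infer_instance

lemma adj_iff (u v : Fin 3 → Bool) :
    cubeGraph.Adj u v ↔ u ≠ v ∧
      ((Finset.univ.filter fun i => u i ≠ v i).card = 1 ∨
       (Finset.univ.filter fun i => v i ≠ u i).card = 1) := by
  simp only [cubeGraph, SimpleGraph.fromRel_adj, ncard_eq_filter]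

lemma inDeg_po (v : Fin 3 → Bool) :
    inDeg po v = (Finset.univ.filter fun u => po u v).card :=
  ncard_eq_filter _

/-- `Q₃` has proper orientation number exactly `2`: it has a proper
`2`-orientation but no proper `1`-orientation. -/
theorem cube_proper_orientation_number :
    (∃ o, IsOrientation cubeGraph o ∧ IsProper cubeGraph o ∧
      ∀ v, inDeg o v ≤ 2) ∧
    ¬ ∃ o, IsOrientation cubeGraph o ∧ IsProper cubeGraph o ∧
      ∀ v, inDeg o v ≤ 1 := by
  constructor
  · refine ⟨po, ⟨?_, ?_⟩, ?_, ?_⟩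
    · simp only [adj_iff]; decide
    · decide
    · intro u v h
      rw [adj_iff] at h
      rw [inDeg_po, inDeg_po]
      revert h; revert u v; decide
    · simp only [inDeg_po]; decide
  · rintro ⟨o, ⟨hadj, hasym⟩, hprop, hbd⟩
    -- a vertex of indegree 0 has all edges outgoing
    have key1 : ∀ v, inDeg o v = 0 → ∀ u, ¬ o u v := by
      intro v h u hu
      have he : {u | o u v} = ∅ := (Set.ncard_eq_zero (Set.toFinite _)).mp h
      exact absurd (he ▸ hu : u ∈ (∅ : Set (Fin 3 → Bool))) (by simp)
    have key2 : ∀ v u w, u ≠ w → o u v → o w v → 2 ≤ inDeg o v := by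
      intro v u w huw hu hw
      have : 1 < ({x | o x v}).ncard :=
        (Set.one_lt_ncard (Set.toFinite _)).mpr ⟨u, hu, w, hw, huw⟩
      exact this
    -- general local argument
    have key : ∀ w n₁ n₂ x : Fin 3 → Bool, n₁ ≠ n₂ → w ≠ x →
        cubeGraph.Adj w n₁ → cubeGraph.Adj w n₂ →
        cubeGraph.Adj n₁ x → cubeGraph.Adj n₂ x →
        inDeg o w = 0 → False := by
      intro w n₁ n₂ x hnn hwx hwn₁ hwn₂ hn₁x hn₂x hw0
      have out : ∀ n, cubeGraph.Adj w n → o w n := by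
        intro n hn
        rcases (hadj w n).mp hn with h | h
        · exact h
        · exact absurd h (key1 w hw0 n)
      have hwn₁' := out _ hwn₁
      have hwn₂' := out _ hwn₂
      have hforward : ∀ n, o w n → cubeGraph.Adj n x → o n x := by
        intro n hwn hnx
        rcases (hadj n x).mp hnx with h | h
        · exact h
        · exact absurd (hbd n) (by have := key2 n w x hwx hwn h; omega)
      have h1 := hforward _ hwn₁' hn₁x
      have h2 := hforward _ hwn₂' hn₂x
      have := key2 x n₁ n₂ hnn h1 h2
      have := hbd x
      omega
    -- one of two adjacent vertices has indegree 0
    have hadj01 : cubeGraph.Adj ![false,false,false] ![true,false,false] := by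
      rw [adj_iff]
      constructor
      · intro h; exact absurd (congrFun h 0) (by simp)
      · left; decide
    have hne := hprop _ _ hadj01
    have hb0 := hbd ![false,false,false]
    have hb1 := hbd ![true,false,false]
    have hzero : inDeg o ![false,false,false] = 0 ∨ inDeg o ![true,false,false] = 0 := by
      omega
    have adjd : ∀ u v : Fin 3 → Bool,
        (u ≠ v ∧ ((Finset.univ.filter fun i => u i ≠ v i).card = 1 ∨
         (Finset.univ.filter fun i => v i ≠ u i).card = 1)) → cubeGraph.Adj u v := by
      intro u v h; rw [adj_iff]; exact h
    rcases hzero with h | h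
    · exact key ![false,false,false] ![true,false,false] ![false,true,false]
        ![true,true,false] (by decide) (by decide)
        (adjd _ _ (by decide)) (adjd _ _ (by decide))
        (adjd _ _ (by decide)) (adjd _ _ (by decide)) h
    · exact key ![true,false,false] ![false,false,false] ![true,true,false]
        ![false,true,false] (by decide) (by decide)
        (adjd _ _ (by decide)) (adjd _ _ (by decide))
        (adjd _ _ (by decide)) (adjd _ _ (by decide)) h
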